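/- Let p ≥ 2 be an even integer, κ < 0 and λ > 0 real numbers, and set c := (−κ/λ)^{1/p} > 0. Suppose y : [0,∞) → ℝ is differentiable and satisfies the scalar modal ODE ẏ(t) = κ·y(t) + λ·y(t)^{p+1} for all t ≥ 0 with |y(0)| < c. Then |y(t)| < c for all t ≥ 0 (forward invariance of the interval (−c, c)) and y(t) → 0 as t → ∞. -/

import Mathlib

open Filter Real Set

/-- For even p, κ < 0 < λ, the interval (−c, c) with c = (−κ/λ)^{1/p}
is forward invariant and attracts to the origin. -/
theorem stmt_5 (p : ℕ) (hp : 2 ≤ p) (hpe : Even p) (κ lam : ℝ)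
    (hκ : κ < 0) (hlam : 0 < lam)
    (c : ℝ) (hc : c = ((-κ) / lam) ^ ((1 : ℝ) / (p : ℝ)))
    (y : ℝ → ℝ)
    (hy : ∀ t : ℝ, 0 ≤ t → HasDerivAt y (κ * y t + lam * y t ^ (p + 1)) t)
    (hy0 : |y 0| < c) :
    (∀ t : ℝ, 0 ≤ t → |y t| < c)
    ∧ Filter.Tendsto y Filter.atTop (nhds 0) := by
  have hp0 : p ≠ 0 := by omega
  have hx : 0 < (-κ) / lam := div_pos (neg_pos.2 hκ) hlam
  have hc0 : 0 < c := hc ▸ Real.rpow_pos_of_pos hx _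
  have hcp : c ^ p = -κ / lam := by
    rw [hc, ← Real.rpow_natCast (((-κ) / lam) ^ ((1 : ℝ) / (p : ℝ))) p,
      ← Real.rpow_mul hx.le, one_div_mul_cancel (by exact_mod_cast hp0), Real.rpow_one]
  set a := |y 0| with ha_def
  have ha0 : 0 ≤ a := abs_nonneg _
  set b := (a + c) / 2 with hb_def
  have hab : a < b := by rw [hb_def]; linarith
  have hbc : b < c := by rw [hb_def]; linarith
  have hb0 : 0 < b := lt_of_le_of_lt ha0 hab
  set K := κ + lam * b ^ p with hK_def
  have hKneg : K < 0 := by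
    have hbp : b ^ p < c ^ p := pow_lt_pow_left₀ hbc hb0.le hp0
    have : lam * b ^ p < lam * c ^ p := by
      exact (mul_lt_mul_iff_right₀ hlam).2 hbp
    rw [hcp, mul_div_cancel₀ _ hlam.ne'] at this
    rw [hK_def]; linarith
  -- pointwise bound on the nonlinear coefficient
  have hcoef : ∀ t : ℝ, |y t| ≤ b → κ + lam * y t ^ p ≤ K := by
    intro t ht
    have h1 : y t ^ p ≤ b ^ p := by
      rw [← hpe.pow_abs]
      exact pow_le_pow_left₀ (abs_nonneg _) ht p
    have := (mul_le_mul_iff_right₀ hlam).2 h1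
    rw [hK_def]; linarith
  have hcont : ∀ t : ℝ, 0 ≤ t → ContinuousAt y t := fun t ht => (hy t ht).continuousAt
  -- derivative of v = y^2
  have hv : ∀ t : ℝ, 0 ≤ t →
      HasDerivAt (fun s => y s ^ 2) (2 * (κ + lam * y t ^ p) * y t ^ 2) t := by
    intro t ht
    have := (hy t ht).fun_pow 2
    refine this.congr_deriv ?_
    push_cast
    ring
  -- Step 1: forward invariance of |y| < b
  have hinv : ∀ t : ℝ, 0 ≤ t → |y t| < b := by
    by_contra h
    push_neg at h
    obtain ⟨t₀, ht₀, hbt₀⟩ := h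
    set S := {t : ℝ | 0 ≤ t ∧ b ≤ |y t|} with hS_def
    have hSne : S.Nonempty := ⟨t₀, ht₀, hbt₀⟩
    have hbdd : BddBelow S := ⟨0, fun t ht => ht.1⟩
    set T := sInf S with hT_def
    have hT0 : 0 ≤ T := le_csInf hSne fun t ht => ht.1
    have hTcl : T ∈ closure S := csInf_mem_closure hSne hbdd
    have hTmem : b ≤ |y T| := by
      haveI hne : (nhdsWithin T S).NeBot := mem_closure_iff_nhdsWithin_neBot.1 hTcl
      have htd : Filter.Tendsto (fun s => |y s|) (nhdsWithin T S) (nhds |y T|) :=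
        (((hcont T hT0).abs).continuousWithinAt (s := S)).tendsto
      exact ge_of_tendsto htd (eventually_mem_nhdsWithin.mono fun s hs => hs.2)
    have hlt : ∀ t : ℝ, 0 ≤ t → t < T → |y t| < b := by
      intro t ht htT
      by_contra hge
      push_neg at hge
      exact absurd (csInf_le hbdd ⟨ht, hge⟩) (not_le.2 htT)
    have hT0' : 0 < T := by
      rcases hT0.lt_or_eq with h | h
      · exact h
      · exact absurd hTmem (by rw [← h]; exact not_le.2 hab)
    have hanti : AntitoneOn (fun s => y s ^ 2) (Icc 0 T) := by
      apply antitoneOn_of_deriv_nonpos (convex_Icc 0 T)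
      · exact fun t ht => ((hcont t ht.1).pow 2).continuousWithinAt
      · intro t ht
        rw [interior_Icc] at ht
        exact ((hv t ht.1.le).differentiableAt).differentiableWithinAt
      · intro t ht
        rw [interior_Icc] at ht
        rw [(hv t ht.1.le).deriv]
        have hyb : |y t| ≤ b := (hlt t ht.1.le ht.2).le
        have h1 : κ + lam * y t ^ p ≤ 0 := (hcoef t hyb).trans hKneg.le
        have h2 : (0:ℝ) ≤ y t ^ 2 := sq_nonneg _
        nlinarith
    have h1 : y T ^ 2 ≤ y 0 ^ 2 :=
      hanti (Set.left_mem_Icc.2 hT0) (Set.right_mem_Icc.2 hT0) hT0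
    have h2 : b ^ 2 ≤ y T ^ 2 := by
      rw [← sq_abs (y T)]; exact pow_le_pow_left₀ hb0.le hTmem 2
    have h3 : y 0 ^ 2 < b ^ 2 := by
      rw [← sq_abs]; exact pow_lt_pow_left₀ hab ha0 (by norm_num)
    linarith
  refine ⟨fun t ht => (hinv t ht).trans hbc, ?_⟩
  -- Step 2: exponential decay via w = y^2 * exp(-(2K) t)
  have hw : ∀ t : ℝ, 0 ≤ t →
      HasDerivAt (fun s => y s ^ 2 * Real.exp (-(2 * K) * s))
        (2 * (κ + lam * y t ^ p) * y t ^ 2 * Real.exp (-(2 * K) * t)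
          + y t ^ 2 * (Real.exp (-(2 * K) * t) * (-(2 * K)))) t := by
    intro t ht
    have hlin : HasDerivAt (fun s : ℝ => -(2 * K) * s) (-(2 * K)) t := by
      simpa using (hasDerivAt_id t).const_mul (-(2 * K))
    exact (hv t ht).mul hlin.exp
  have hwanti : AntitoneOn (fun s => y s ^ 2 * Real.exp (-(2 * K) * s)) (Ici 0) := by
    apply antitoneOn_of_deriv_nonpos (convex_Ici 0)
    · exact fun t ht => (((hcont t ht).pow 2).mul
        (Real.continuous_exp.comp (continuous_const.mul continuous_id)).continuousAt).continuousWithinAt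
    · intro t ht
      rw [interior_Ici] at ht
      exact ((hw t ht.le).differentiableAt).differentiableWithinAt
    · intro t ht
      rw [interior_Ici] at ht
      rw [(hw t ht.le).deriv]
      have h1 : κ + lam * y t ^ p ≤ K := hcoef t (hinv t ht.le).le
      have h2 : (0:ℝ) ≤ y t ^ 2 := sq_nonneg _
      have h3 : (0:ℝ) < Real.exp (-(2 * K) * t) := Real.exp_pos _
      nlinarith [mul_nonpos_of_nonpos_of_nonneg (sub_nonpos.2 h1)
        (mul_nonneg h2 h3.le)]
  have hbound : ∀ t : ℝ, 0 ≤ t → |y t| ≤ a * Real.exp (K * t) := by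
    intro t ht
    have h1 : y t ^ 2 * Real.exp (-(2 * K) * t) ≤ y 0 ^ 2 * Real.exp (-(2 * K) * 0) :=
      hwanti (Set.self_mem_Ici) ht ht
    rw [mul_zero, Real.exp_zero, mul_one] at h1
    have h2 : y t ^ 2 ≤ y 0 ^ 2 * Real.exp (2 * K * t) := by
      have h3 : (0:ℝ) < Real.exp (-(2 * K) * t) := Real.exp_pos _
      have h4 := mul_le_mul_of_nonneg_right h1 (Real.exp_pos (2 * K * t)).le
      rwa [mul_assoc, ← Real.exp_add, neg_mul, neg_add_cancel, Real.exp_zero, mul_one] at h4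
    have hsq : Real.sqrt (Real.exp (2 * K * t)) = Real.exp (K * t) := by
      rw [show (2:ℝ) * K * t = K * t + K * t by ring, Real.exp_add,
        Real.sqrt_mul_self (Real.exp_pos _).le]
    calc |y t| = Real.sqrt (y t ^ 2) := (Real.sqrt_sq_eq_abs _).symm
      _ ≤ Real.sqrt (y 0 ^ 2 * Real.exp (2 * K * t)) := Real.sqrt_le_sqrt h2
      _ = a * Real.exp (K * t) := by
          rw [Real.sqrt_mul (sq_nonneg _), Real.sqrt_sq_eq_abs, hsq, ha_def]
  -- conclude tendsto
  have hg : Tendsto (fun t => a * Real.exp (K * t)) atTop (nhds 0) := by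
    have h1 : Tendsto (fun t : ℝ => K * t) atTop atBot :=
      tendsto_id.const_mul_atTop_of_neg hKneg
    have h2 : Tendsto (fun t => Real.exp (K * t)) atTop (nhds 0) :=
      Real.tendsto_exp_comp_nhds_zero.2 h1
    simpa using h2.const_mul a
  exact squeeze_zero_norm'
    ((eventually_ge_atTop 0).mono fun t ht => by
      rw [Real.norm_eq_abs]; exact hbound t ht) hg
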